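/- Let G = (V ∪ {Y,d,d̄}, E) be the switch graph of a terminating ARRIVAL instance, let S ⊆ V, and suppose every v ∈ V \ S has a directed path to {d, d̄} ∪ S of length at most ℓ. Then in any continuation of the Multi-Run procedure starting from a configuration with R waiting trains, at most R·((n - ℓ + 2)·2^ℓ - 2) further edge traversals occur, where n = |V|. -/

import Mathlib

variable {V : Type} [Fintype V] [DecidableEq V]

/-- An ARRIVAL instance: origin `o` and two successor functions into `V ⊕ Bool`,
where `Sum.inr false` is the destination `d` and `Sum.inr true` is `d̄`. -/
structure Arrival (V : Type) where
  o : V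
  sEven : V → V ⊕ Bool
  sOdd : V → V ⊕ Bool

/-- Destination predicate. -/
def DestP {V : Type} : V ⊕ Bool → Prop := fun u => ∃ t, u = Sum.inr t

/-- Edge relation of the switch graph (proper edges only). -/
def Arrival.Edge (A : Arrival V) (u w : V ⊕ Bool) : Prop :=
  ∃ x : V, u = Sum.inl x ∧ (w = A.sEven x ∨ w = A.sOdd x)

/-- There is a directed walk of length `m` from `u` to a vertex satisfying `P`. -/
def Arrival.PathLen (A : Arrival V) (u : V ⊕ Bool) (P : V ⊕ Bool → Prop) (m : ℕ) : Prop :=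
  ∃ f : ℕ → V ⊕ Bool, f 0 = u ∧ P (f m) ∧ ∀ i < m, A.Edge (f i) (f (i + 1))

/-- `m` is the length of a shortest directed path from `u` to a vertex satisfying `P`. -/
def Arrival.ShortestLen (A : Arrival V) (u : V ⊕ Bool) (P : V ⊕ Bool → Prop) (m : ℕ) : Prop :=
  A.PathLen u P m ∧ ∀ m' < m, ¬ A.PathLen u P m'

/-- The instance is terminating: from every vertex a destination is reachable. -/
def Arrival.Terminating (A : Arrival V) : Prop :=
  ∀ v : V, ∃ m, A.PathLen (Sum.inl v) DestP m

/-- One step of the run procedure on states (position, switch configuration);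
`false` means the current successor is the even one. Destinations are absorbing. -/
def Arrival.runStep [DecidableEq V] (A : Arrival V) :
    (V ⊕ Bool) × (V → Bool) → (V ⊕ Bool) × (V → Bool) := fun s =>
  match s.1 with
  | Sum.inr _ => s
  | Sum.inl v => ((if s.2 v then A.sOdd v else A.sEven v),
      fun u => if u = v then !s.2 v else s.2 u)

/-- The state of the run procedure after `k` proper steps (the train starts at `o`). -/
def Arrival.run [DecidableEq V] (A : Arrival V) (k : ℕ) : (V ⊕ Bool) × (V → Bool) :=
  A.runStep^[k] (Sum.inl A.o, fun _ => false)

/-- A flow on the edges of the switch graph: value on the yard edge `(Y,o)` and on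
the even/odd edge slot out of each vertex. -/
structure SFlow (V : Type) where
  yard : ℕ
  ev : V → ℕ
  od : V → ℕ

/-- Outflow `x⁺(v)` at a vertex `v ∈ V`. -/
def SFlow.out {V : Type} (x : SFlow V) (v : V) : ℕ := x.ev v + x.od v

/-- Inflow `x⁻(u)` at a vertex `u` of the switch graph. -/
def SFlow.into (A : Arrival V) (x : SFlow V) (u : V ⊕ Bool) : ℕ :=
  (if Sum.inl A.o = u then x.yard else 0) +
    ∑ v : V, ((if A.sEven v = u then x.ev v else 0) + (if A.sOdd v = u then x.od v else 0))

/-- Total flow `Σ_e x_e`. -/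
def SFlow.total [Fintype V] (x : SFlow V) : ℕ := x.yard + ∑ v : V, (x.ev v + x.od v)

/-- Switching flow: unit outflow at the yard, flow conservation at every `v ∈ V`,
and switching behavior `x_{(v,s_even(v))} - x_{(v,s_odd(v))} ∈ {0,1}`. -/
def IsSwitchingFlow (A : Arrival V) (x : SFlow V) : Prop :=
  x.yard = 1 ∧ (∀ v : V, x.out v = SFlow.into A x (Sum.inl v)) ∧
    ∀ v : V, x.od v ≤ x.ev v ∧ x.ev v ≤ x.od v + 1

/-- State of the Multi-Run procedure: `ev/od` count edge traversals so far,
`t` counts trains currently present at each vertex, and `sw v = true` means the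
current successor of `v` is the odd one. -/
structure MState (V : Type) where
  ev : V → ℕ
  od : V → ℕ
  t : V ⊕ Bool → ℕ
  sw : V → Bool

/-- Current successor. -/
def Arrival.curr (A : Arrival V) (s : MState V) (v : V) : V ⊕ Bool :=
  if s.sw v then A.sOdd v else A.sEven v

/-- Next successor. -/
def Arrival.nxt (A : Arrival V) (s : MState V) (v : V) : V ⊕ Bool :=
  if s.sw v then A.sEven v else A.sOdd v

/-- Initial state of the Multi-Run procedure: one train is started from the yard
(arriving at `o`) and `w v` trains are started from each `v ∈ S`, with `⌈w v/2⌉`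
moving to the even successor and `⌊w v/2⌋` to the odd successor. -/
def mInit (A : Arrival V) (S : Finset V) (w : V → ℕ) : MState V where
  ev := fun v => if v ∈ S then (w v + 1) / 2 else 0
  od := fun v => if v ∈ S then w v / 2 else 0
  t := fun u => (if Sum.inl A.o = u then 1 else 0) +
      ∑ v ∈ S, ((if A.sEven v = u then (w v + 1) / 2 else 0) +
        (if A.sOdd v = u then w v / 2 else 0))
  sw := fun _ => false

/-- One iteration of the Multi-Run procedure: move `τ` of the trains waiting at `v`,
`⌈τ/2⌉` to the current successor and `⌊τ/2⌋` to the next one, swapping the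
successors if `τ` is odd. -/
def MStepAt (A : Arrival V) (v : V) (τ : ℕ) (s s' : MState V) : Prop :=
  1 ≤ τ ∧ τ ≤ s.t (Sum.inl v) ∧
  s'.ev = (fun u => s.ev u + if u = v then (if s.sw v then τ / 2 else (τ + 1) / 2) else 0) ∧
  s'.od = (fun u => s.od u + if u = v then (if s.sw v then (τ + 1) / 2 else τ / 2) else 0) ∧
  s'.t = (fun u => (s.t u - if u = Sum.inl v then τ else 0) +
      ((if A.curr s v = u then (τ + 1) / 2 else 0) + (if A.nxt s v = u then τ / 2 else 0))) ∧
  s'.sw = fun u => if u = v then Bool.xor (s.sw v) (τ % 2 == 1) else s.sw u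

/-- One (nondeterministic) iteration: some vertex outside `S` with waiting trains is picked. -/
def MStep (A : Arrival V) (S : Finset V) (s s' : MState V) : Prop :=
  ∃ v ∉ S, ∃ τ, MStepAt A v τ s s'

/-- No trains are waiting outside `S`. -/
def IsFinal (S : Finset V) (s : MState V) : Prop :=
  ∀ v : V, v ∉ S → s.t (Sum.inl v) = 0

/-- Edge-traversal profile of a Multi-Run state. -/
def flowOf {V : Type} (s : MState V) : SFlow V := ⟨1, s.ev, s.od⟩


/-! ### Auxiliary development for the Multi-Run continuation bound -/

namespace MRB

set_option linter.unusedSectionVars false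

open Finset

/-- Parity of visits flips the current switch: `flipN b c` is the switch position after
`c` unit moves starting from position `b`. -/
def flipN (b : Bool) (c : ℕ) : Bool := if c % 2 = 1 then !b else b

/-- Number of the first `c` unit moves (starting from switch position `b`) that use the
even successor. -/
def evA (b : Bool) (c : ℕ) : ℕ := if b then c / 2 else (c + 1) / 2

/-- Number of the first `c` unit moves that use the odd successor. -/
def odA (b : Bool) (c : ℕ) : ℕ := evA (!b) c

@[simp] lemma flipN_zero (b : Bool) : flipN b 0 = b := by simp [flipN]

lemma flipN_succ (b : Bool) (c : ℕ) : flipN b (c + 1) = !(flipN b c) := by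
  rcases Nat.mod_two_eq_zero_or_one c with hc | hc
  · have hc1 : (c + 1) % 2 = 1 := by omega
    simp [flipN, hc, hc1]
  · have hc1 : (c + 1) % 2 = 0 := by omega
    simp [flipN, hc, hc1]

lemma flipN_add (b : Bool) (x y : ℕ) : flipN b (x + y) = flipN (flipN b x) y := by
  rcases Nat.mod_two_eq_zero_or_one x with hx | hx <;>
    rcases Nat.mod_two_eq_zero_or_one y with hy | hy
  · have h : (x + y) % 2 = 0 := by omega
    simp [flipN, hx, hy, h]
  · have h : (x + y) % 2 = 1 := by omega
    simp [flipN, hx, hy, h]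
  · have h : (x + y) % 2 = 1 := by omega
    simp [flipN, hx, hy, h]
  · have h : (x + y) % 2 = 0 := by omega
    simp [flipN, hx, hy, h]

lemma flipN_eq_xor (b : Bool) (τ : ℕ) : flipN b τ = Bool.xor b (τ % 2 == 1) := by
  rcases Nat.mod_two_eq_zero_or_one τ with hc | hc <;> simp [flipN, hc]

@[simp] lemma evA_zero (b : Bool) : evA b 0 = 0 := by cases b <;> simp [evA]

@[simp] lemma odA_zero (b : Bool) : odA b 0 = 0 := by simp [odA]

lemma evA_add_odA (b : Bool) (c : ℕ) : evA b c + odA b c = c := by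
  cases b <;> simp [evA, odA] <;> omega

lemma evA_succ (b : Bool) (c : ℕ) :
    evA b (c + 1) = evA b c + (if flipN b c then 0 else 1) := by
  rcases Nat.mod_two_eq_zero_or_one c with hc | hc <;> cases b <;>
    simp [evA, flipN, hc] <;> omega

lemma odA_succ (b : Bool) (c : ℕ) :
    odA b (c + 1) = odA b c + (if flipN b c then 1 else 0) := by
  rcases Nat.mod_two_eq_zero_or_one c with hc | hc <;> cases b <;>
    simp [odA, evA, flipN, hc] <;> omega

lemma evA_add (b : Bool) (x y : ℕ) : evA b (x + y) = evA b x + evA (flipN b x) y := by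
  rcases Nat.mod_two_eq_zero_or_one x with hx | hx <;> cases b <;>
    simp [evA, flipN, hx] <;> omega

lemma odA_add (b : Bool) (x y : ℕ) : odA b (x + y) = odA b x + odA (flipN b x) y := by
  unfold odA
  rw [evA_add]
  congr 2
  unfold flipN; split <;> simp

lemma evA_mono (b : Bool) {x y : ℕ} (h : x ≤ y) : evA b x ≤ evA b y := by
  cases b <;> simp [evA] <;> omega

lemma odA_mono (b : Bool) {x y : ℕ} (h : x ≤ y) : odA b x ≤ odA b y := by
  unfold odA; exact evA_mono _ h

lemma evA_le (b : Bool) (c : ℕ) : evA b c ≤ c := by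
  cases b <;> simp [evA] <;> omega

lemma evA_one (b : Bool) : evA b 1 = if b then 0 else 1 := by cases b <;> simp [evA]

variable {V : Type} [Fintype V] [DecidableEq V]

/-- Trains stop at destinations and at vertices of `S`. -/
def StopP (S : Finset V) (u : V ⊕ Bool) : Prop := (∃ s ∈ S, u = Sum.inl s) ∨ DestP u

lemma stopP_inl {S : Finset V} {v : V} : StopP S (Sum.inl v) ↔ v ∈ S := by
  constructor
  · rintro (⟨s, hs, he⟩ | ⟨t, ht⟩)
    · cases he; exact hs
    · cases ht
  · intro h; exact Or.inl ⟨v, h, rfl⟩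

lemma stopP_inr {S : Finset V} (b : Bool) : StopP S (Sum.inr b) := Or.inr ⟨b, rfl⟩

instance {S : Finset V} : DecidablePred (StopP S) := fun u =>
  match u with
  | Sum.inl v => decidable_of_iff (v ∈ S) stopP_inl.symm
  | Sum.inr b => isTrue (stopP_inr b)

/-- The successor of `v` on side `b`. -/
def target (A : Arrival V) (v : V) (b : Bool) : V ⊕ Bool := if b then A.sOdd v else A.sEven v

/-- Inflow into `u` determined by per-vertex unit-move counts `c` and initial switch
positions `sw`. -/
def inflow (A : Arrival V) (sw : V → Bool) (c : V → ℕ) (u : V ⊕ Bool) : ℕ :=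
  ∑ w : V, ((if A.sEven w = u then evA (sw w) (c w) else 0) +
    (if A.sOdd w = u then odA (sw w) (c w) else 0))

lemma inflow_zero (A : Arrival V) (sw : V → Bool) (u : V ⊕ Bool) :
    inflow A sw (fun _ => 0) u = 0 := by
  simp [inflow]

lemma inflow_mono (A : Arrival V) (sw : V → Bool) {c c' : V → ℕ} (h : ∀ v, c v ≤ c' v)
    (u : V ⊕ Bool) : inflow A sw c u ≤ inflow A sw c' u := by
  refine Finset.sum_le_sum fun w _ => add_le_add ?_ ?_ <;> split <;>
    first
      | exact evA_mono _ (h w)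
      | exact odA_mono _ (h w)
      | exact le_rfl

lemma inflow_add (A : Arrival V) (sw : V → Bool) (c c' : V → ℕ) (u : V ⊕ Bool) :
    inflow A sw (fun v => c v + c' v) u =
      inflow A sw c u + inflow A (fun v => flipN (sw v) (c v)) c' u := by
  unfold inflow
  rw [← Finset.sum_add_distrib]
  refine Finset.sum_congr rfl fun w _ => ?_
  rw [evA_add, odA_add]
  split <;> split <;> ring

/-- Single-train step: the train stops at destinations and at vertices of `S`. -/
def sstep (A : Arrival V) (S : Finset V) (s : (V ⊕ Bool) × (V → Bool)) :
    (V ⊕ Bool) × (V → Bool) :=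
  Sum.elim
    (fun v => if v ∈ S then s else
      (target A v (s.2 v), fun u => if u = v then !s.2 v else s.2 u))
    (fun _ => s) s.1

variable (A : Arrival V) (S : Finset V) (sw0 : V → Bool) (v0 : V)

/-- The single-train trajectory. -/
def straj (j : ℕ) : (V ⊕ Bool) × (V → Bool) := (sstep A S)^[j] (Sum.inl v0, sw0)

/-- Position at time `j`. -/
def pos (j : ℕ) : V ⊕ Bool := (straj A S sw0 v0 j).1

/-- Switch configuration at time `j`. -/
def bit (j : ℕ) : V → Bool := (straj A S sw0 v0 j).2

@[simp] lemma pos_zero : pos A S sw0 v0 0 = Sum.inl v0 := rfl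

@[simp] lemma bit_zero : bit A S sw0 v0 0 = sw0 := rfl

lemma straj_succ (j : ℕ) : straj A S sw0 v0 (j + 1) = sstep A S (straj A S sw0 v0 j) :=
  Function.iterate_succ_apply' _ _ _

lemma sstep_stop {s : (V ⊕ Bool) × (V → Bool)} (h : StopP S s.1) : sstep A S s = s := by
  unfold sstep
  rcases hs : s.1 with v | b
  · rw [hs] at h
    simp [if_pos (stopP_inl.1 h)]
  · simp

lemma straj_stop {j : ℕ} (h : StopP S (pos A S sw0 v0 j)) :
    straj A S sw0 v0 (j + 1) = straj A S sw0 v0 j := by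
  rw [straj_succ]; exact sstep_stop A S h

lemma pos_act {j : ℕ} {v : V} (h : pos A S sw0 v0 j = Sum.inl v) (hv : v ∉ S) :
    pos A S sw0 v0 (j + 1) = target A v (bit A S sw0 v0 j v) ∧
      bit A S sw0 v0 (j + 1) = fun u => if u = v then !bit A S sw0 v0 j u
        else bit A S sw0 v0 j u := by
  have h1 : straj A S sw0 v0 (j+1) = sstep A S (straj A S sw0 v0 j) := straj_succ A S sw0 v0 j
  unfold sstep at h1
  rw [show (straj A S sw0 v0 j).1 = pos A S sw0 v0 j from rfl, h] at h1
  simp only [Sum.elim_inl, if_neg hv] at h1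
  constructor
  · rw [pos, h1]
    rfl
  · rw [bit, h1]
    funext u
    by_cases hu : u = v <;> simp [hu, bit]

lemma bit_other {j : ℕ} {v : V} (h : pos A S sw0 v0 j ≠ Sum.inl v) :
    bit A S sw0 v0 (j + 1) v = bit A S sw0 v0 j v := by
  have h1 : straj A S sw0 v0 (j+1) = sstep A S (straj A S sw0 v0 j) := straj_succ A S sw0 v0 j
  unfold sstep at h1
  rw [show (straj A S sw0 v0 j).1 = pos A S sw0 v0 j from rfl] at h1
  rcases hs : pos A S sw0 v0 j with w | b
  · rw [hs] at h1
    simp only [Sum.elim_inl] at h1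
    by_cases hw : w ∈ S
    · rw [if_pos hw] at h1
      rw [bit, h1]
      rfl
    · rw [if_neg hw] at h1
      have hvw : v ≠ w := fun he => h (he ▸ hs)
      rw [bit, h1]
      simp [hvw, bit]
  · rw [hs] at h1
    simp only [Sum.elim_inr] at h1
    rw [bit, h1]
    rfl

/-- Number of visits to `v` before time `N`. -/
def cnt (v : V) (N : ℕ) : ℕ :=
  ((Finset.range N).filter (fun j => pos A S sw0 v0 j = Sum.inl v)).card

/-- Number of visits to `v` before time `N` at which the switch points to side `bb`. -/
def scnt (v : V) (bb : Bool) (N : ℕ) : ℕ :=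
  ((Finset.range N).filter
    (fun j => pos A S sw0 v0 j = Sum.inl v ∧ bit A S sw0 v0 j v = bb)).card

/-- Number of entries into `u` up to time `N`. -/
def ecnt (u : V ⊕ Bool) (N : ℕ) : ℕ :=
  ((Finset.range N).filter (fun j => pos A S sw0 v0 (j + 1) = u)).card

@[simp] lemma cnt_zero (v : V) : cnt A S sw0 v0 v 0 = 0 := by simp [cnt]

lemma cnt_succ (v : V) (N : ℕ) :
    cnt A S sw0 v0 v (N + 1) =
      cnt A S sw0 v0 v N + (if pos A S sw0 v0 N = Sum.inl v then 1 else 0) := by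
  unfold cnt
  rw [Finset.range_add_one, Finset.filter_insert]
  split <;> simp [Finset.card_insert_of_notMem]

lemma scnt_succ (v : V) (bb : Bool) (N : ℕ) :
    scnt A S sw0 v0 v bb (N + 1) =
      scnt A S sw0 v0 v bb N + (if pos A S sw0 v0 N = Sum.inl v ∧
        bit A S sw0 v0 N v = bb then 1 else 0) := by
  unfold scnt
  rw [Finset.range_add_one, Finset.filter_insert]
  split <;> simp [Finset.card_insert_of_notMem]

lemma ecnt_succ (u : V ⊕ Bool) (N : ℕ) :
    ecnt A S sw0 v0 u (N + 1) =
      ecnt A S sw0 v0 u N + (if pos A S sw0 v0 (N + 1) = u then 1 else 0) := by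
  unfold ecnt
  rw [Finset.range_add_one, Finset.filter_insert]
  split <;> simp [Finset.card_insert_of_notMem]

lemma cnt_mono (v : V) {N N' : ℕ} (h : N ≤ N') :
    cnt A S sw0 v0 v N ≤ cnt A S sw0 v0 v N' :=
  Finset.card_le_card (Finset.filter_subset_filter _ (by simpa using h))

lemma bit_formula {v : V} (hv : v ∉ S) (j : ℕ) :
    bit A S sw0 v0 j v = flipN (sw0 v) (cnt A S sw0 v0 v j) := by
  induction j with
  | zero => simp
  | succ j ih =>
    by_cases h : pos A S sw0 v0 j = Sum.inl v
    · have := (pos_act A S sw0 v0 h hv).2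
      rw [cnt_succ, if_pos h, flipN_succ, ← ih, this]
      simp
    · rw [bit_other A S sw0 v0 h, cnt_succ, if_neg h, ih, Nat.add_zero]

lemma scnt_formula {v : V} (hv : v ∉ S) (bb : Bool) (N : ℕ) :
    scnt A S sw0 v0 v bb N =
      if bb = sw0 v then (cnt A S sw0 v0 v N + 1) / 2 else cnt A S sw0 v0 v N / 2 := by
  induction N with
  | zero => simp [scnt]
  | succ N ih =>
    rw [scnt_succ, cnt_succ, ih]
    by_cases h : pos A S sw0 v0 N = Sum.inl v
    · rw [if_pos h]
      have hb := bit_formula A S sw0 v0 hv N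
      set c := cnt A S sw0 v0 v N with hc
      rcases Nat.mod_two_eq_zero_or_one c with hpar | hpar <;>
        cases hsw : sw0 v <;> cases bb <;>
          simp_all [flipN, hpar] <;> omega
    · rw [if_neg h]
      simp only [h, false_and, if_false, Nat.add_zero]

lemma scnt_false {v : V} (hv : v ∉ S) (N : ℕ) :
    scnt A S sw0 v0 v false N = evA (sw0 v) (cnt A S sw0 v0 v N) := by
  rw [scnt_formula A S sw0 v0 hv]
  cases hsw : sw0 v <;> simp [evA]

lemma scnt_true {v : V} (hv : v ∉ S) (N : ℕ) :
    scnt A S sw0 v0 v true N = odA (sw0 v) (cnt A S sw0 v0 v N) := by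
  rw [scnt_formula A S sw0 v0 hv]
  cases hsw : sw0 v <;> simp [odA, evA]

lemma ecnt_eq_inflow (u : V ⊕ Bool) (N : ℕ)
    (hact : ∀ j < N, ¬ StopP S (pos A S sw0 v0 j)) :
    ecnt A S sw0 v0 u N = inflow A sw0 (fun v => cnt A S sw0 v0 v N) u := by
  induction N with
  | zero => simp [ecnt, inflow]
  | succ N ih =>
    have hactN : ¬ StopP S (pos A S sw0 v0 N) := hact N (Nat.lt_succ_self N)
    obtain ⟨w, hw, hpos⟩ : ∃ w, w ∉ S ∧ pos A S sw0 v0 N = Sum.inl w := by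
      rcases hp : pos A S sw0 v0 N with w | b
      · refine ⟨w, fun hmem => hactN ?_, rfl⟩
        rw [hp]; exact stopP_inl.2 hmem
      · exact absurd (hp ▸ stopP_inr b) hactN
    have hbit : bit A S sw0 v0 N w = flipN (sw0 w) (cnt A S sw0 v0 w N) :=
      bit_formula A S sw0 v0 hw N
    have hstep : pos A S sw0 v0 (N + 1) = target A w (bit A S sw0 v0 N w) :=
      (pos_act A S sw0 v0 hpos hw).1
    have hcnt : ∀ x, cnt A S sw0 v0 x (N + 1) =
        cnt A S sw0 v0 x N + (if x = w then 1 else 0) := by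
      intro x
      rw [cnt_succ, hpos]
      by_cases hx : x = w
      · subst hx; simp
      · rw [if_neg (fun h => hx (Sum.inl.inj h).symm), if_neg hx]
    set D : ℕ := (if A.sEven w = u then (if bit A S sw0 v0 N w then 0 else 1) else 0) +
      (if A.sOdd w = u then (if bit A S sw0 v0 N w then 1 else 0) else 0) with hD
    have hrhs : inflow A sw0 (fun v => cnt A S sw0 v0 v (N + 1)) u =
        inflow A sw0 (fun v => cnt A S sw0 v0 v N) u + D := by
      unfold inflow
      have hterm : ∀ x : V,
          ((if A.sEven x = u then evA (sw0 x) (cnt A S sw0 v0 x (N + 1)) else 0) +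
            (if A.sOdd x = u then odA (sw0 x) (cnt A S sw0 v0 x (N + 1)) else 0)) =
          ((if A.sEven x = u then evA (sw0 x) (cnt A S sw0 v0 x N) else 0) +
            (if A.sOdd x = u then odA (sw0 x) (cnt A S sw0 v0 x N) else 0)) +
          (if x = w then D else 0) := by
        intro x
        have hbit' : flipN (sw0 w) (cnt A S sw0 v0 w N) = bit A S sw0 v0 N w := hbit.symm
        by_cases hx : x = w
        · subst hx
          rw [hcnt x, if_pos rfl, evA_succ, odA_succ, hbit', hD]
          by_cases he : A.sEven x = u <;> by_cases ho : A.sOdd x = u <;>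
            cases hb : bit A S sw0 v0 N x <;> simp [he, ho] <;> ring
        · simp [hcnt x, hx]
      rw [Finset.sum_congr rfl (fun x _ => hterm x), Finset.sum_add_distrib,
        Finset.sum_ite_eq' Finset.univ w (fun _ => D), if_pos (Finset.mem_univ w)]
    have hdelta : (if pos A S sw0 v0 (N + 1) = u then 1 else 0) = D := by
      rw [hstep, hD]
      cases hb : bit A S sw0 v0 N w <;> simp only [target, if_true, if_false, Bool.false_eq_true] <;>
        by_cases he : A.sEven w = u <;> by_cases ho : A.sOdd w = u <;> simp [he, ho]
    rw [ecnt_succ, hrhs, ← ih (fun j hj => hact j (Nat.lt_succ_of_lt hj)), hdelta]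

lemma cnt_eq_entries {v : V} (N : ℕ) :
    cnt A S sw0 v0 v (N + 1) =
      (if v = v0 then 1 else 0) + ecnt A S sw0 v0 (Sum.inl v) N := by
  induction N with
  | zero =>
    rw [cnt_succ]
    simp [ecnt, eq_comm]
  | succ N ih =>
    rw [cnt_succ, ih, ecnt_succ]
    ring

/-- Termination of the single-train run. -/
lemma exists_stop (hv0 : v0 ∉ S)
    (hpath : ∀ v : V, v ∉ S → ∃ m, A.PathLen (Sum.inl v) (StopP S) m) :
    ∃ N, StopP S (pos A S sw0 v0 N) := by
  by_contra hcon
  push_neg at hcon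
  have hvert : ∀ j, ∃ v, v ∉ S ∧ pos A S sw0 v0 j = Sum.inl v := by
    intro j
    rcases hp : pos A S sw0 v0 j with w | b
    · refine ⟨w, fun hmem => hcon j ?_, rfl⟩
      rw [hp]; exact stopP_inl.2 hmem
    · exact absurd (hp ▸ stopP_inr b) (hcon j)
  -- unbounded-visits set
  set I : Set V := {v | ∀ M : ℕ, ∃ j, M < j ∧ pos A S sw0 v0 j = Sum.inl v} with hI
  have hInotS : ∀ v ∈ I, v ∉ S := by
    intro v hv
    obtain ⟨j, _, hj⟩ := hv 0
    intro hmem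
    exact hcon j (hj ▸ stopP_inl.2 hmem)
  -- pigeonhole: some vertex is visited unboundedly often
  have hInonempty : ∃ v, v ∈ I := by
    classical
    obtain ⟨v, hv⟩ := Finite.exists_infinite_fiber (fun j => (hvert j).choose)
    refine ⟨v, fun M => ?_⟩
    have hinf : Set.Infinite ((fun j => (hvert j).choose) ⁻¹' {v}) :=
      Set.infinite_coe_iff.1 hv
    obtain ⟨j, hjmem, hjM⟩ := hinf.exists_gt M
    refine ⟨j, hjM, ?_⟩
    have hsp := (hvert j).choose_spec.2
    rw [Set.mem_preimage, Set.mem_singleton_iff] at hjmem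
    rw [hsp, hjmem]
  -- cnt is unbounded for members of I
  have hub : ∀ v ∈ I, ∀ c : ℕ, ∃ N, c < cnt A S sw0 v0 v N := by
    intro v hv c
    induction c with
    | zero =>
      obtain ⟨j, _, hj⟩ := hv 0
      exact ⟨j + 1, by rw [cnt_succ, if_pos hj]; omega⟩
    | succ c ih =>
      obtain ⟨N, hN⟩ := ih
      obtain ⟨j, hjN, hj⟩ := hv N
      refine ⟨j + 1, ?_⟩
      rw [cnt_succ, if_pos hj]
      have := cnt_mono A S sw0 v0 v (le_of_lt hjN)
      omega
  have hexv : ∀ v : V, ∀ c N : ℕ, c < cnt A S sw0 v0 v N →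
      ∃ j, pos A S sw0 v0 j = Sum.inl v ∧ cnt A S sw0 v0 v j = c := by
    intro v c N
    induction N with
    | zero => simp
    | succ N ih =>
      intro hc
      rw [cnt_succ] at hc
      by_cases hp : pos A S sw0 v0 N = Sum.inl v
      · rw [if_pos hp] at hc
        rcases Nat.lt_or_ge c (cnt A S sw0 v0 v N) with h | h
        · exact ih h
        · exact ⟨N, hp, by omega⟩
      · rw [if_neg hp] at hc
        exact ih (by omega)
  -- each member of I has unboundedly many visits with each switch side
  have hside : ∀ v ∈ I, ∀ bb : Bool, ∀ M : ℕ, ∃ j, M < j ∧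
      pos A S sw0 v0 j = Sum.inl v ∧ bit A S sw0 v0 j v = bb := by
    intro v hv bb M
    have hvS := hInotS v hv
    set c0 := cnt A S sw0 v0 v (M + 1) with hc0
    have hpick : ∃ c, c0 < c ∧ flipN (sw0 v) c = bb := by
      rcases Bool.eq_or_eq_not (flipN (sw0 v) (c0 + 1)) bb with h | h
      · exact ⟨c0 + 1, by omega, h⟩
      · refine ⟨c0 + 2, by omega, ?_⟩
        rw [show c0 + 2 = (c0 + 1) + 1 by rfl, flipN_succ, h]
        simp
    obtain ⟨c, hcgt, hcb⟩ := hpick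
    obtain ⟨N, hN⟩ := hub v hv c
    obtain ⟨j, hjp, hjc⟩ := hexv v c N hN
    have hjM : M < j := by
      by_contra hle
      push_neg at hle
      have := cnt_mono A S sw0 v0 v (show j ≤ M + 1 by omega)
      omega
    exact ⟨j, hjM, hjp, by rw [bit_formula A S sw0 v0 hvS, hjc, hcb]⟩
  -- successors of members of I are members of I
  have hsucc : ∀ v ∈ I, ∀ bb : Bool, ∃ w ∈ I, target A v bb = Sum.inl w := by
    intro v hv bb
    have hvS := hInotS v hv
    obtain ⟨j, _, hjp, hjb⟩ := hside v hv bb 0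
    have hstep : pos A S sw0 v0 (j + 1) = target A v bb := by
      rw [(pos_act A S sw0 v0 hjp hvS).1, hjb]
    obtain ⟨w, hwS, hwp⟩ := hvert (j + 1)
    refine ⟨w, ?_, by rw [← hstep, hwp]⟩
    intro M
    obtain ⟨j', _, hjp', hjb'⟩ := hside v hv bb M
    refine ⟨j' + 1, by omega, ?_⟩
    rw [(pos_act A S sw0 v0 hjp' hvS).1, hjb', ← hstep, hwp]
  -- follow a path from a member of I to a contradiction
  obtain ⟨v1, hv1⟩ := hInonempty
  obtain ⟨m, f, hf0, hfP, hfE⟩ := hpath v1 (hInotS v1 hv1)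
  have hchain : ∀ i ≤ m, ∃ w ∈ I, f i = Sum.inl w := by
    intro i
    induction i with
    | zero => exact fun _ => ⟨v1, hv1, hf0⟩
    | succ i ih =>
      intro hi
      obtain ⟨w, hwI, hwf⟩ := ih (by omega)
      obtain ⟨x, hxf, hxe⟩ := hfE i (by omega)
      rw [hwf] at hxf
      have hxw : x = w := by injection hxf.symm
      subst hxw
      rcases hxe with h | h
      · obtain ⟨w', hw', ht⟩ := hsucc x hwI false
        exact ⟨w', hw', by rw [h, ← ht]; rfl⟩
      · obtain ⟨w', hw', ht⟩ := hsucc x hwI true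
        exact ⟨w', hw', by rw [h, ← ht]; rfl⟩
  obtain ⟨w, hwI, hwf⟩ := hchain m le_rfl
  rw [hwf] at hfP
  exact hInotS w hwI (stopP_inl.1 hfP)

lemma flipN_of_even (b : Bool) {c : ℕ} (h : c % 2 = 0) : flipN b c = b := by
  simp [flipN, h]

/-- Times (up to the stopping time `T`) at which the train is at `u`. -/
def Wset (T : ℕ) (u : V ⊕ Bool) : Finset ℕ :=
  (Finset.range (T + 1)).filter (fun j => pos A S sw0 v0 j = u)

lemma mem_Wset {T : ℕ} {u : V ⊕ Bool} {j : ℕ} :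
    j ∈ Wset A S sw0 v0 T u ↔ j ≤ T ∧ pos A S sw0 v0 j = u := by
  simp [Wset, Nat.lt_succ_iff]

section Core

variable {T : ℕ} (hT : StopP S (pos A S sw0 v0 T))
  (hmin : ∀ j < T, ¬ StopP S (pos A S sw0 v0 j))

include hT hmin

lemma stop_ge {j : ℕ} (h : StopP S (pos A S sw0 v0 j)) : T ≤ j := by
  by_contra hlt
  exact hmin j (by omega) h

lemma Wset_card_inl {v : V} (hv : v ∉ S) :
    (Wset A S sw0 v0 T (Sum.inl v)).card = cnt A S sw0 v0 v T := by
  unfold Wset cnt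
  congr 1
  rw [Finset.range_add_one, Finset.filter_insert]
  rw [if_neg]
  intro hTv
  rw [hTv] at hT
  exact hv (stopP_inl.1 hT)

lemma scnt_le_Wset {v : V} (hv : v ∉ S) (bb : Bool) :
    scnt A S sw0 v0 v bb T ≤ (Wset A S sw0 v0 T (target A v bb)).card := by
  unfold scnt
  apply Finset.card_le_card_of_injOn (fun j => j + 1)
  · intro j hj
    simp only [Finset.mem_coe, Finset.mem_filter, Finset.mem_range] at hj
    obtain ⟨hjT, hjp, hjb⟩ := hj
    rw [Finset.mem_coe, mem_Wset]
    beta_reduce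
    refine ⟨by omega, ?_⟩
    rw [(pos_act A S sw0 v0 hjp hv).1, hjb]
  · intro x _ y _ h
    exact Nat.add_right_cancel h

/-- The central bound: up to the stopping time, the train is at `u` at most `2 ^ D u`
times; moreover a saturated vertex is last visited exactly `D u` steps before the end,
after which the train races to its stopping point along vertices of decreasing depth. -/
lemma visit_bound (D : V ⊕ Bool → ℕ)
    (hD0 : ∀ u, D u = 0 ↔ StopP S u)
    (hDsucc : ∀ v : V, v ∉ S → ∃ bb, D (target A v bb) + 1 = D (Sum.inl v)) :
    ∀ k, ∀ u : V ⊕ Bool, D u = k →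
      (Wset A S sw0 v0 T u).card ≤ 2 ^ k ∧
      ((Wset A S sw0 v0 T u).card = 2 ^ k → ∃ s, s + k = T ∧ pos A S sw0 v0 s = u ∧
        ∀ j, s < j → j ≤ T → D (pos A S sw0 v0 j) + j = T) := by
  intro k
  induction k using Nat.strong_induction_on with
  | _ k ih =>
  intro u hu
  match k, hu with
  | 0, hu =>
    -- stopped vertices are seen only at time T
    have hstop : StopP S u := (hD0 u).1 hu
    have hsub : Wset A S sw0 v0 T u ⊆ {T} := by
      intro j hj
      rw [mem_Wset] at hj
      have : T ≤ j := stop_ge A S sw0 v0 hT hmin (hj.2 ▸ hstop)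
      simp only [Finset.mem_singleton]
      omega
    constructor
    · simpa using Finset.card_le_card hsub
    · intro hcard
      have heq : Wset A S sw0 v0 T u = {T} :=
        Finset.eq_of_subset_of_card_le hsub (by simp [hcard])
      have hTmem : T ∈ Wset A S sw0 v0 T u := heq ▸ Finset.mem_singleton_self T
      rw [mem_Wset] at hTmem
      exact ⟨T, by omega, hTmem.2, fun j h1 h2 => by omega⟩
  | (k' + 1), hu =>
    -- active vertices
    obtain ⟨v, hv, rfl⟩ : ∃ v, v ∉ S ∧ u = Sum.inl v := by
      rcases u with v | b
      · refine ⟨v, fun hmem => ?_, rfl⟩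
        rw [(hD0 _).2 (stopP_inl.2 hmem)] at hu
        omega
      · rw [(hD0 _).2 (stopP_inr b)] at hu
        omega
    obtain ⟨bU, hbU⟩ := hDsucc v hv
    set u' : V ⊕ Bool := target A v bU with hu'
    have hDu' : D u' = k' := by omega
    have IH := ih k' (by omega) u' hDu'
    set a : ℕ := cnt A S sw0 v0 v T with ha
    have haW : (Wset A S sw0 v0 T (Sum.inl v)).card = a := Wset_card_inl A S sw0 v0 hT hmin hv
    set mU : ℕ := scnt A S sw0 v0 v bU T with hmU
    have hmU_le : mU ≤ 2 ^ k' := le_trans (scnt_le_Wset A S sw0 v0 hT hmin hv bU) IH.1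
    have hmU_eq : mU = if bU = sw0 v then (a + 1) / 2 else a / 2 :=
      scnt_formula A S sw0 v0 hv bU T
    have hpow : 2 ^ (k' + 1) = 2 * 2 ^ k' := by ring
    -- saturation machinery
    have hsat : mU = 2 ^ k' → ∃ e, pos A S sw0 v0 e = Sum.inl v ∧
        bit A S sw0 v0 e v = bU ∧ e + (k' + 1) = T ∧
        (∀ j, e + 1 < j → j ≤ T → D (pos A S sw0 v0 j) + j = T) ∧
        pos A S sw0 v0 (e + 1) = u' := by
      intro hsatU
      have hWu'card : (Wset A S sw0 v0 T u').card = 2 ^ k' :=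
        le_antisymm IH.1 (hsatU ▸ scnt_le_Wset A S sw0 v0 hT hmin hv bU)
      obtain ⟨s', hs'T, hs'pos, hwin⟩ := IH.2 hWu'card
      -- the image of the `bU`-exits fills all of `Wset u'`
      set E : Finset ℕ := (Finset.range T).filter
        (fun j => pos A S sw0 v0 j = Sum.inl v ∧ bit A S sw0 v0 j v = bU) with hE
      have hEsub : E.image (fun j => j + 1) ⊆ Wset A S sw0 v0 T u' := by
        intro x hx
        simp only [Finset.mem_image] at hx
        obtain ⟨j, hj, rfl⟩ := hx
        simp only [hE, Finset.mem_filter, Finset.mem_range] at hj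
        obtain ⟨hjT, hjp, hjb⟩ := hj
        rw [mem_Wset]
        exact ⟨by omega, by rw [(pos_act A S sw0 v0 hjp hv).1, hjb]⟩
      have hEcard : (E.image (fun j => j + 1)).card = 2 ^ k' := by
        rw [Finset.card_image_of_injective _ (fun x y h => by omega)]
        exact hsatU
      have hEeq : E.image (fun j => j + 1) = Wset A S sw0 v0 T u' :=
        Finset.eq_of_subset_of_card_le hEsub (by omega)
      -- every element of Wset u' is at most s'
      have hle : ∀ j ∈ Wset A S sw0 v0 T u', j ≤ s' := by
        intro j hj
        rw [mem_Wset] at hj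
        by_contra hgt
        push_neg at hgt
        have := hwin j hgt hj.1
        rw [hj.2, hDu'] at this
        omega
      have hs'mem : s' ∈ Wset A S sw0 v0 T u' := by
        rw [mem_Wset]
        exact ⟨by omega, hs'pos⟩
      obtain ⟨e, heE, heq⟩ : ∃ e ∈ E, e + 1 = s' := by
        have := hEeq ▸ hs'mem
        simp only [Finset.mem_image] at this
        obtain ⟨e, he, heq⟩ := this
        exact ⟨e, he, heq⟩
      simp only [hE, Finset.mem_filter, Finset.mem_range] at heE
      refine ⟨e, heE.2.1, heE.2.2, by omega, ?_, by rw [heq]; exact hs'pos⟩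
      intro j h1 h2
      exact hwin j (by omega) h2
    constructor
    · -- main bound
      by_contra hbig
      push_neg at hbig
      have hage : 2 ^ (k' + 1) + 1 ≤ a := by omega
      have hcase : ¬ (bU = sw0 v) := by
        intro hc
        rw [if_pos hc] at hmU_eq
        omega
      rw [if_neg hcase] at hmU_eq
      have hmUsat : mU = 2 ^ k' := by omega
      have haodd : a = 2 ^ (k' + 1) + 1 := by omega
      obtain ⟨e, hep, heb, heT, hewin, heu'⟩ := hsat hmUsat
      -- last visit to v
      have hWne : (Wset A S sw0 v0 T (Sum.inl v)).Nonempty := by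
        rw [← Finset.card_pos, haW]; omega
      obtain ⟨τ, hτmem, hτmax⟩ : ∃ τ, τ ∈ Wset A S sw0 v0 T (Sum.inl v) ∧
          ∀ j ∈ Wset A S sw0 v0 T (Sum.inl v), j ≤ τ :=
        ⟨_, Finset.max'_mem _ hWne, fun j hj => Finset.le_max' _ j hj⟩
      rw [mem_Wset] at hτmem
      have hfil : (Finset.range (τ + 1)).filter (fun j => pos A S sw0 v0 j = Sum.inl v) =
          Wset A S sw0 v0 T (Sum.inl v) := by
        apply Finset.Subset.antisymm
        · intro j hj
          simp only [Finset.mem_filter, Finset.mem_range] at hj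
          rw [mem_Wset]
          exact ⟨by omega, hj.2⟩
        · intro j hj
          have hjτ := hτmax j hj
          rw [mem_Wset] at hj
          simp only [Finset.mem_filter, Finset.mem_range]
          exact ⟨by omega, hj.2⟩
      have hcntτ : cnt A S sw0 v0 v (τ + 1) = a := by
        rw [ha]
        show ((Finset.range (τ+1)).filter (fun j => pos A S sw0 v0 j = Sum.inl v)).card = _
        rw [hfil, haW, ha]
      have hcntτ' : cnt A S sw0 v0 v τ = 2 ^ (k' + 1) := by
        have := cnt_succ A S sw0 v0 v τ
        rw [if_pos hτmem.2] at this
        omega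
      have hbitτ : bit A S sw0 v0 τ v = sw0 v := by
        rw [bit_formula A S sw0 v0 hv, hcntτ', flipN_of_even]
        omega
      have hτe : e ≤ τ := by
        apply hτmax
        rw [mem_Wset]
        exact ⟨by omega, hep⟩
      have hτne : τ ≠ e := by
        intro hc
        rw [hc, heb] at hbitτ
        exact hcase hbitτ
      -- τ > e leads to a contradiction via the endgame window
      rcases Nat.lt_or_ge (e + 1) τ with hgt | hle2
      · have := hewin τ hgt hτmem.1
        rw [hτmem.2, hu] at this
        omega
      · have hτe1 : τ = e + 1 := by omega
        rw [hτe1] at hτmem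
        rw [hτmem.2] at heu'
        rw [← heu'] at hDu'
        rw [hu] at hDu'
        omega
    · -- payload
      intro hcard
      rw [haW] at hcard
      have hmUsat : mU = 2 ^ k' := by
        rw [hmU_eq]
        split <;> [skip; skip] <;> omega
      obtain ⟨e, hep, heb, heT, hewin, heu'⟩ := hsat hmUsat
      refine ⟨e, heT, hep, ?_⟩
      intro j h1 h2
      rcases Nat.lt_or_ge (e + 1) j with hgt | hle2
      · exact hewin j hgt h2
      · have hj : j = e + 1 := by omega
        rw [hj, heu', hDu']
        omega

end Core

lemma pathLen_prepend {A : Arrival V} {P : V ⊕ Bool → Prop} {u : V ⊕ Bool} {m : ℕ}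
    (h : A.PathLen u P m) {v : V} {bb : Bool} (ht : target A v bb = u) :
    A.PathLen (Sum.inl v) P (m + 1) := by
  obtain ⟨f, hf0, hfP, hfE⟩ := h
  refine ⟨fun i => if i = 0 then Sum.inl v else f (i - 1), by simp, by simpa using hfP, ?_⟩
  intro i hi
  rcases i with _ | j
  · simp only [if_pos rfl, if_neg (Nat.one_ne_zero), Nat.sub_self]
    refine ⟨v, rfl, ?_⟩
    rw [hf0, ← ht]
    cases bb
    · exact Or.inl rfl
    · exact Or.inr rfl
  · simp only [if_neg (Nat.succ_ne_zero j), Nat.succ_sub_one]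
    have := hfE j (by omega)
    simpa using this

/-- Construction of the depth function from the bounded-path hypothesis. -/
lemma exists_D (A : Arrival V) (S : Finset V) (ℓ : ℕ)
    (hpath : ∀ v : V, v ∉ S → ∃ m ≤ ℓ, A.PathLen (Sum.inl v) (StopP S) m) :
    ∃ D : V ⊕ Bool → ℕ,
      (∀ u, D u = 0 ↔ StopP S u) ∧
      (∀ v : V, v ∉ S → ∃ bb, D (target A v bb) + 1 = D (Sum.inl v)) ∧
      (∀ v : V, v ∉ S → D (Sum.inl v) ≤ ℓ) ∧
      (∀ v : V, v ∉ S → 2 ≤ D (Sum.inl v) →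
        ∃ w, w ∉ S ∧ D (Sum.inl w) + 1 = D (Sum.inl v)) := by
  classical
  have hex : ∀ v : V, v ∉ S → ∃ m, A.PathLen (Sum.inl v) (StopP S) m := by
    intro v hv
    obtain ⟨m, _, hm⟩ := hpath v hv
    exact ⟨m, hm⟩
  set d : V → ℕ := fun v => if h : v ∉ S then Nat.find (hex v h) else 0 with hd
  set D : V ⊕ Bool → ℕ := Sum.elim d (fun _ => 0) with hD
  have hpos : ∀ v : V, v ∉ S → 1 ≤ d v := by
    intro v hv
    rw [hd]
    simp only [dif_pos hv]
    rw [Nat.one_le_iff_ne_zero]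
    intro h0
    have := Nat.find_spec (hex v hv)
    rw [h0] at this
    obtain ⟨f, hf0, hfP, _⟩ := this
    rw [hf0] at hfP
    exact hv (stopP_inl.1 hfP)
  have hDstop : ∀ u, D u = 0 ↔ StopP S u := by
    intro u
    rcases u with v | b
    · constructor
      · intro h
        by_contra hns
        have hv : v ∉ S := fun hmem => hns (stopP_inl.2 hmem)
        have := hpos v hv
        simp only [hD, Sum.elim_inl] at h
        omega
      · intro hs
        have hv : v ∈ S := stopP_inl.1 hs
        simp [hD, hd, hv]
    · simp [hD, stopP_inr]
  have hDfind : ∀ v : V, (hv : v ∉ S) → D (Sum.inl v) = Nat.find (hex v hv) := by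
    intro v hv
    simp only [hD, Sum.elim_inl, hd]
    rw [dif_pos hv]
  have hsucc : ∀ v : V, v ∉ S → ∃ bb, D (target A v bb) + 1 = D (Sum.inl v) := by
    intro v hv
    have hm := Nat.find_spec (hex v hv)
    set m := Nat.find (hex v hv) with hmdef
    have hm1 : 1 ≤ m := by
      have := hpos v hv
      rw [hd] at this
      simp only [dif_pos hv] at this
      omega
    obtain ⟨f, hf0, hfP, hfE⟩ := hm
    obtain ⟨x, hx0, hxe⟩ := hfE 0 (by omega)
    rw [hf0] at hx0
    have hxv : x = v := by injection hx0.symm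
    subst hxv
    obtain ⟨bb, hbb⟩ : ∃ bb, target A x bb = f 1 := by
      rcases hxe with h | h
      · exact ⟨false, h.symm⟩
      · exact ⟨true, h.symm⟩
    refine ⟨bb, ?_⟩
    have hshift : A.PathLen (f 1) (StopP S) (m - 1) := by
      refine ⟨fun i => f (i + 1), rfl, ?_, ?_⟩
      · show StopP S (f (m - 1 + 1))
        rw [show m - 1 + 1 = m by omega]
        exact hfP
      · intro i hi
        exact hfE (i + 1) (by omega)
    by_cases hstop : StopP S (f 1)
    · have hD1 : D (f 1) = 0 := (hDstop _).2 hstop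
      have hle1 : m ≤ 1 := by
        rw [hmdef]
        apply Nat.find_le
        exact ⟨f, hf0, by simpa using hstop, fun i hi => by
          have : i = 0 := by omega
          subst this
          exact ⟨x, hf0, hxe⟩⟩
      rw [hbb, hD1]
      rw [hDfind x hv, ← hmdef]
      omega
    · obtain ⟨w, hw, hfw⟩ : ∃ w, w ∉ S ∧ f 1 = Sum.inl w := by
        rcases hf1 : f 1 with w | b
        · exact ⟨w, fun hmem => hstop (hf1 ▸ stopP_inl.2 hmem), rfl⟩
        · exact absurd (hf1 ▸ stopP_inr b) hstop
      have hle : Nat.find (hex w hw) ≤ m - 1 := Nat.find_le (hfw ▸ hshift)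
      have hge : m - 1 ≤ Nat.find (hex w hw) := by
        by_contra hlt
        push_neg at hlt
        have hp := Nat.find_spec (hex w hw)
        have : A.PathLen (Sum.inl x) (StopP S) (Nat.find (hex w hw) + 1) :=
          pathLen_prepend hp (by rw [hbb, hfw])
        have hfind := Nat.find_le (h := hex x hv) this
        rw [← hmdef] at hfind
        omega
      rw [hbb, hfw, hDfind w hw, hDfind x hv, ← hmdef]
      omega
  refine ⟨D, hDstop, hsucc, ?_, ?_⟩
  · intro v hv
    rw [hDfind v hv]
    obtain ⟨m, hmle, hm⟩ := hpath v hv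
    exact le_trans (Nat.find_le hm) hmle
  · intro v hv h2
    obtain ⟨bb, hbb⟩ := hsucc v hv
    rcases ht : target A v bb with w | b
    · rw [ht] at hbb
      refine ⟨w, ?_, hbb⟩
      intro hmem
      rw [(hDstop _).2 (stopP_inl.2 hmem)] at hbb
      omega
    · rw [ht, (hDstop _).2 (stopP_inr b)] at hbb
      omega

lemma sum_Icc_two_pow (M : ℕ) : ∑ k ∈ Finset.Icc 1 M, 2 ^ k = 2 ^ (M + 1) - 2 := by
  induction M with
  | zero => simp
  | succ M ih =>
    rw [Finset.sum_Icc_succ_top (by omega), ih]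
    have h2 : 2 ≤ 2 ^ (M + 1) := Nat.one_lt_two_pow_iff.2 (by omega)
    have : (2:ℕ) ^ (M + 1 + 1) = 2 ^ (M + 1) + 2 ^ (M + 1) := by ring
    omega

lemma pow_step_mono (n M : ℕ) : ∀ j, (n - M + 2) * 2 ^ M ≤ (n - (M + j) + 2) * 2 ^ (M + j) := by
  intro j
  induction j with
  | zero => simp
  | succ j ih =>
    refine le_trans ih ?_
    calc (n - (M + j) + 2) * 2 ^ (M + j)
        ≤ (2 * (n - (M + j + 1) + 2)) * 2 ^ (M + j) := by
          apply Nat.mul_le_mul_right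
          omega
      _ = (n - (M + (j + 1)) + 2) * 2 ^ (M + (j + 1)) := by ring

/-- The combinatorial bound on the sum of per-vertex visit bounds. -/
lemma sum_pow_le (S : Finset V) (D : V ⊕ Bool → ℕ) (n ℓ : ℕ) (hn : Fintype.card V = n)
    (hge : ∀ v : V, v ∉ S → 1 ≤ D (Sum.inl v))
    (hle : ∀ v : V, v ∉ S → D (Sum.inl v) ≤ ℓ)
    (hlad : ∀ v : V, v ∉ S → 2 ≤ D (Sum.inl v) →
      ∃ w, w ∉ S ∧ D (Sum.inl w) + 1 = D (Sum.inl v)) :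
    ∑ v ∈ Finset.univ \ S, 2 ^ D (Sum.inl v) ≤ (n - ℓ + 2) * 2 ^ ℓ - 2 := by
  classical
  set F : Finset V := Finset.univ \ S with hF
  have hFS : ∀ v ∈ F, v ∉ S := by
    intro v hv
    exact (Finset.mem_sdiff.1 hv).2
  rcases Finset.eq_empty_or_nonempty F with hemp | hne
  · rw [hemp]
    simp
  obtain ⟨vm, hvmF, hvmax⟩ := Finset.exists_max_image F (fun v => D (Sum.inl v)) hne
  set M := D (Sum.inl vm) with hM
  have hM1 : 1 ≤ M := hge vm (hFS vm hvmF)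
  have hMl : M ≤ ℓ := hle vm (hFS vm hvmF)
  have hall : ∀ j, j + 1 ≤ M → ∃ v ∈ F, D (Sum.inl v) = M - j := by
    intro j
    induction j with
    | zero => exact fun _ => ⟨vm, hvmF, by omega⟩
    | succ j ih =>
      intro hj
      obtain ⟨v, hvF, hvD⟩ := ih (by omega)
      obtain ⟨w, hwS, hwD⟩ := hlad v (hFS v hvF) (by omega)
      refine ⟨w, Finset.mem_sdiff.2 ⟨Finset.mem_univ w, hwS⟩, by omega⟩
  have hall' : ∀ k, 1 ≤ k → k ≤ M → ∃ v ∈ F, D (Sum.inl v) = k := by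
    intro k h1 h2
    obtain ⟨v, hvF, hvD⟩ := hall (M - k) (by omega)
    exact ⟨v, hvF, by omega⟩
  set r : ℕ → V := fun k => if h : 1 ≤ k ∧ k ≤ M then (hall' k h.1 h.2).choose else vm with hr
  have hrF : ∀ k, 1 ≤ k → k ≤ M → r k ∈ F ∧ D (Sum.inl (r k)) = k := by
    intro k h1 h2
    rw [hr]
    simp only [dif_pos (And.intro h1 h2)]
    exact (hall' k h1 h2).choose_spec
  -- cardinality: F has at least M elements
  have hcard : M ≤ F.card := by
    have : (Finset.Icc 1 M).card ≤ F.card := by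
      apply Finset.card_le_card_of_injOn r
      · intro k hk
        rw [Finset.mem_coe, Finset.mem_Icc] at hk
        exact (hrF k hk.1 hk.2).1
      · intro x hx y hy hxy
        rw [Finset.mem_coe, Finset.mem_Icc] at hx hy
        have h1 := (hrF x hx.1 hx.2).2
        have h2 := (hrF y hy.1 hy.2).2
        rw [hxy] at h1
        omega
    simpa using this
  have hFn : F.card ≤ n := by
    rw [← hn]
    exact Finset.card_le_univ F
  -- split off one representative of each depth 1 .. M-1
  set Reps : Finset V := (Finset.Icc 1 (M - 1)).image r with hReps
  have hRF : Reps ⊆ F := by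
    intro v hv
    rw [hReps, Finset.mem_image] at hv
    obtain ⟨k, hk, rfl⟩ := hv
    rw [Finset.mem_Icc] at hk
    exact (hrF k hk.1 (by omega)).1
  have hinj : Set.InjOn r (Finset.Icc 1 (M - 1)) := by
    intro x hx y hy hxy
    rw [Finset.mem_coe, Finset.mem_Icc] at hx hy
    have h1 := (hrF x hx.1 (by omega)).2
    have h2 := (hrF y hy.1 (by omega)).2
    rw [hxy] at h1
    omega
  have hRcard : Reps.card = M - 1 := by
    rw [hReps, Finset.card_image_of_injOn hinj]
    simp
  have hRsum : ∑ v ∈ Reps, 2 ^ D (Sum.inl v) = 2 ^ M - 2 := by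
    rw [hReps, Finset.sum_image hinj]
    have : ∀ k ∈ Finset.Icc 1 (M - 1), 2 ^ D (Sum.inl (r k)) = 2 ^ k := by
      intro k hk
      rw [Finset.mem_Icc] at hk
      rw [(hrF k hk.1 (by omega)).2]
    rw [Finset.sum_congr rfl this, sum_Icc_two_pow]
    rw [show M - 1 + 1 = M by omega]
  have hRest : ∑ v ∈ F \ Reps, 2 ^ D (Sum.inl v) ≤ (F.card - (M - 1)) * 2 ^ M := by
    have hb : ∀ v ∈ F \ Reps, 2 ^ D (Sum.inl v) ≤ 2 ^ M :=
      fun v hv => Nat.pow_le_pow_right (by omega)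
        (hvmax v (Finset.mem_sdiff.1 hv).1)
    calc ∑ v ∈ F \ Reps, 2 ^ D (Sum.inl v) ≤ (F \ Reps).card * 2 ^ M := by
          simpa using Finset.sum_le_card_nsmul _ _ _ hb
      _ = (F.card - (M - 1)) * 2 ^ M := by
          rw [Finset.card_sdiff_of_subset hRF, hRcard]
  have hsplit : ∑ v ∈ F, 2 ^ D (Sum.inl v) =
      ∑ v ∈ F \ Reps, 2 ^ D (Sum.inl v) + ∑ v ∈ Reps, 2 ^ D (Sum.inl v) :=
    (Finset.sum_sdiff hRF).symm
  have hkey := pow_step_mono n M (ℓ - M)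
  rw [show M + (ℓ - M) = ℓ by omega] at hkey
  have h2M : 2 ≤ 2 ^ M := Nat.one_lt_two_pow_iff.2 (by omega)
  have h2l : 2 ≤ 2 ^ ℓ := le_trans h2M (Nat.pow_le_pow_right (by omega) hMl)
  have hmul : (F.card - (M - 1)) * 2 ^ M ≤ (n - M + 1) * 2 ^ M := by
    apply Nat.mul_le_mul_right
    omega
  have hfin : (n - M + 1) * 2 ^ M + (2 ^ M - 2) ≤ (n - M + 2) * 2 ^ M - 2 := by
    have : (n - M + 2) * 2 ^ M = (n - M + 1) * 2 ^ M + 2 ^ M := by ring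
    omega
  have hlast : (n - M + 2) * 2 ^ M - 2 ≤ (n - ℓ + 2) * 2 ^ ℓ - 2 := by omega
  omega

/-- Full account of one single-train run: a per-vertex traversal-count vector `a`
with exact flow conservation and total at most `(n - ℓ + 2) * 2 ^ ℓ - 2`. -/
lemma single_run (hv0 : v0 ∉ S) (n ℓ : ℕ) (hn : Fintype.card V = n)
    (hpath : ∀ v : V, v ∉ S → ∃ m ≤ ℓ, A.PathLen (Sum.inl v) (StopP S) m) :
    ∃ a : V → ℕ, (∀ v ∈ S, a v = 0) ∧
      (∀ v : V, v ∉ S →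
        (if v = v0 then 1 else 0) + inflow A sw0 a (Sum.inl v) = a v) ∧
      ∑ v : V, a v ≤ (n - ℓ + 2) * 2 ^ ℓ - 2 := by
  classical
  obtain ⟨D, hD0, hDsucc, hDle, hlad⟩ := exists_D A S ℓ hpath
  have hterm : ∃ N, StopP S (pos A S sw0 v0 N) :=
    exists_stop A S sw0 v0 hv0 (fun v hv => by
      obtain ⟨m, _, hm⟩ := hpath v hv
      exact ⟨m, hm⟩)
  obtain ⟨T, hT, hmin⟩ : ∃ T, StopP S (pos A S sw0 v0 T) ∧
      ∀ j < T, ¬ StopP S (pos A S sw0 v0 j) :=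
    ⟨Nat.find hterm, Nat.find_spec hterm, fun j hj => Nat.find_min hterm hj⟩
  refine ⟨fun v => cnt A S sw0 v0 v T, ?_, ?_, ?_⟩
  · -- zero on S
    intro v hv
    unfold cnt
    rw [Finset.card_eq_zero, Finset.filter_eq_empty_iff]
    intro j hj
    rw [Finset.mem_range] at hj
    intro hp
    exact hmin j hj (hp ▸ stopP_inl.2 hv)
  · -- conservation
    intro v hv
    have hT1 : 1 ≤ T := by
      rcases Nat.eq_zero_or_pos T with h0 | h1
      · rw [h0] at hT
        simp only [pos_zero] at hT
        exact absurd (stopP_inl.1 hT) hv0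
      · exact h1
    obtain ⟨T', rfl⟩ : ∃ T', T = T' + 1 := ⟨T - 1, by omega⟩
    have hent := cnt_eq_entries A S sw0 v0 (v := v) T'
    have hecnt : ecnt A S sw0 v0 (Sum.inl v) (T' + 1) = ecnt A S sw0 v0 (Sum.inl v) T' := by
      rw [ecnt_succ, if_neg, Nat.add_zero]
      intro hp
      exact hv (stopP_inl.1 (hp ▸ hT))
    rw [← ecnt_eq_inflow A S sw0 v0 (Sum.inl v) (T' + 1) hmin, hecnt, ← hent]
  · -- total bound
    have hzero : ∀ v ∈ S, cnt A S sw0 v0 v T = 0 := by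
      intro v hv
      unfold cnt
      rw [Finset.card_eq_zero, Finset.filter_eq_empty_iff]
      intro j hj
      rw [Finset.mem_range] at hj
      intro hp
      exact hmin j hj (hp ▸ stopP_inl.2 hv)
    have hsplit : ∑ v : V, cnt A S sw0 v0 v T = ∑ v ∈ Finset.univ \ S, cnt A S sw0 v0 v T := by
      rw [← Finset.sum_sdiff (Finset.subset_univ S)]
      rw [Finset.sum_congr rfl hzero]
      simp
    rw [hsplit]
    have hper : ∀ v ∈ Finset.univ \ S, cnt A S sw0 v0 v T ≤ 2 ^ D (Sum.inl v) := by
      intro v hv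
      have hvS := (Finset.mem_sdiff.1 hv).2
      rw [← Wset_card_inl A S sw0 v0 hT hmin hvS]
      exact (visit_bound A S sw0 v0 hT hmin D hD0 hDsucc (D (Sum.inl v)) (Sum.inl v) rfl).1
    refine le_trans (Finset.sum_le_sum hper) ?_
    exact sum_pow_le S D n ℓ hn
      (fun v hv => by
        have := (hD0 (Sum.inl v)).2
        by_contra h0
        have hz : D (Sum.inl v) = 0 := by omega
        exact hv (stopP_inl.1 ((hD0 _).1 hz)))
      hDle hlad

/-- Inflow of a point mass. -/
lemma inflow_single (A : Arrival V) (sw : V → Bool) (v1 : V) (τ : ℕ) (u : V ⊕ Bool) :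
    inflow A sw (fun w => if w = v1 then τ else 0) u =
      (if A.sEven v1 = u then evA (sw v1) τ else 0) +
      (if A.sOdd v1 = u then odA (sw v1) τ else 0) := by
  unfold inflow
  rw [Finset.sum_eq_single v1]
  · simp
  · intro w _ hw
    simp [hw, odA]
  · intro h
    exact absurd (Finset.mem_univ v1) h

/-- Existence of the capacity vector: a witness profile that completes the Multi-Run
from the given train configuration, with total size at most `R * B`. -/
lemma exists_capacity (n ℓ : ℕ) (hn : Fintype.card V = n)
    (hpath : ∀ v : V, v ∉ S → ∃ m ≤ ℓ, A.PathLen (Sum.inl v) (StopP S) m) :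
    ∀ R : ℕ, ∀ t : V → ℕ, ∀ sw : V → Bool, (∑ v ∈ Finset.univ \ S, t v) = R →
    ∃ c : V → ℕ, (∀ v ∈ S, c v = 0) ∧
      (∀ v : V, v ∉ S → t v + inflow A sw c (Sum.inl v) ≤ c v) ∧
      ∑ v : V, c v ≤ R * ((n - ℓ + 2) * 2 ^ ℓ - 2) := by
  intro R
  induction R with
  | zero =>
    intro t sw hsum
    refine ⟨fun _ => 0, fun _ _ => rfl, ?_, by simp⟩
    intro v hv
    have hv0 : t v = 0 := by
      have := Finset.sum_eq_zero_iff.1 hsum v (Finset.mem_sdiff.2 ⟨Finset.mem_univ v, hv⟩)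
      exact this
    rw [hv0, inflow_zero]
  | succ R ih =>
    intro t sw hsum
    obtain ⟨v0, hv0S, hv0t⟩ : ∃ v0, v0 ∉ S ∧ 1 ≤ t v0 := by
      by_contra hc
      push_neg at hc
      have : ∑ v ∈ Finset.univ \ S, t v = 0 := by
        apply Finset.sum_eq_zero
        intro v hv
        have := hc v (Finset.mem_sdiff.1 hv).2
        omega
      omega
    obtain ⟨a, haS, hacons, hatot⟩ := single_run A S sw v0 hv0S n ℓ hn hpath
    set t' : V → ℕ := fun v => t v - (if v = v0 then 1 else 0) with ht'
    have hsum' : ∑ v ∈ Finset.univ \ S, t' v = R := by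
      have hpt : ∀ v ∈ Finset.univ \ S, t v = t' v + (if v = v0 then 1 else 0) := by
        intro v _
        rw [ht']
        by_cases hv : v = v0 <;> simp [hv] <;> omega
      have hδ : ∑ v ∈ Finset.univ \ S, (if v = v0 then 1 else 0) = 1 := by
        rw [Finset.sum_ite_eq' (Finset.univ \ S) v0 (fun _ => 1)]
        rw [if_pos (Finset.mem_sdiff.2 ⟨Finset.mem_univ v0, hv0S⟩)]
      rw [Finset.sum_congr rfl hpt, Finset.sum_add_distrib, hδ] at hsum
      omega
    obtain ⟨c', hc'S, hc'cons, hc'tot⟩ :=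
      ih t' (fun v => flipN (sw v) (a v)) hsum'
    refine ⟨fun v => a v + c' v, ?_, ?_, ?_⟩
    · intro v hv
      show a v + c' v = 0
      rw [haS v hv, hc'S v hv]
    · intro v hv
      show t v + inflow A sw (fun v => a v + c' v) (Sum.inl v) ≤ a v + c' v
      rw [inflow_add]
      have h1 := hacons v hv
      have h2 := hc'cons v hv
      have h3 : t v = t' v + (if v = v0 then 1 else 0) := by
        rw [ht']
        by_cases hc : v = v0 <;> simp [hc] <;> omega
      by_cases hc : v = v0
      · rw [if_pos hc] at h1 h3
        omega
      · rw [if_neg hc] at h1 h3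
        omega
    · rw [Finset.sum_add_distrib]
      calc ∑ v : V, a v + ∑ v : V, c' v
          ≤ ((n - ℓ + 2) * 2 ^ ℓ - 2) + R * ((n - ℓ + 2) * 2 ^ ℓ - 2) :=
            Nat.add_le_add hatot hc'tot
        _ = (R + 1) * ((n - ℓ + 2) * 2 ^ ℓ - 2) := by ring

end MRB

set_option maxHeartbeats 1000000 in
/-- If every vertex outside `S` has a path of length at most `ℓ` to `{d, d̄} ∪ S`, then
any continuation of the Multi-Run procedure from a configuration with `R` waiting trains
performs at most `R * ((n - ℓ + 2) * 2 ^ ℓ - 2)` further edge traversals. -/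
theorem multirun_continuation_bound (A : Arrival V) (hA : A.Terminating)
    (S : Finset V) (n ℓ : ℕ) (hn : Fintype.card V = n)
    (hpath : ∀ v : V, v ∉ S → ∃ m ≤ ℓ,
      A.PathLen (Sum.inl v) (fun u => (∃ s ∈ S, u = Sum.inl s) ∨ DestP u) m)
    (s₀ : MState V) (R : ℕ) (hR : R = ∑ v ∈ Finset.univ \ S, s₀.t (Sum.inl v))
    (m : ℕ) (f : ℕ → MState V) (h0 : f 0 = s₀)
    (hstep : ∀ i < m, MStep A S (f i) (f (i + 1))) :
    (∑ v : V, ((f m).ev v + (f m).od v)) ≤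
      (∑ v : V, (s₀.ev v + s₀.od v)) + R * ((n - ℓ + 2) * 2 ^ ℓ - 2) := by
  classical
  have hpath' : ∀ v : V, v ∉ S → ∃ m' ≤ ℓ, A.PathLen (Sum.inl v) (MRB.StopP S) m' := hpath
  obtain ⟨cs, hcsS, hcscons, hcstot⟩ :=
    MRB.exists_capacity A S n ℓ hn hpath' R (fun v => s₀.t (Sum.inl v)) s₀.sw hR.symm
  have key : ∀ i, i ≤ m → ∃ c : V → ℕ,
      (∀ v, c v ≤ cs v) ∧
      (∀ v : V, (f i).t (Sum.inl v) + c v =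
        s₀.t (Sum.inl v) + MRB.inflow A s₀.sw c (Sum.inl v)) ∧
      (∀ v, (f i).ev v = s₀.ev v + MRB.evA (s₀.sw v) (c v)) ∧
      (∀ v, (f i).od v = s₀.od v + MRB.odA (s₀.sw v) (c v)) ∧
      (∀ v, (f i).sw v = MRB.flipN (s₀.sw v) (c v)) := by
    intro i
    induction i with
    | zero =>
      intro _
      refine ⟨fun _ => 0, fun v => Nat.zero_le _, ?_, ?_, ?_, ?_⟩ <;> intro v <;>
        simp [h0, MRB.inflow_zero]
    | succ i ih =>
      intro hi1
      obtain ⟨c, hle, hct, hcev, hcod, hcsw⟩ := ih (by omega)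
      obtain ⟨v1, hv1S, τ, hτ1, hτle, hev, hod, ht, hsw⟩ := hstep i (by omega)
      have hswi : (f i).sw v1 = MRB.flipN (s₀.sw v1) (c v1) := hcsw v1
      have hbound : c v1 + τ ≤ cs v1 := by
        by_contra hgt
        push_neg at hgt
        have h2 := hct v1
        have h3 := MRB.inflow_mono A s₀.sw hle (Sum.inl v1)
        have h4 := hcscons v1 hv1S
        omega
      refine ⟨fun u => c u + (if u = v1 then τ else 0), ?_, ?_, ?_, ?_, ?_⟩
      · intro v
        by_cases hv : v = v1
        · subst hv
          simpa using hbound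
        · simpa [hv] using hle v
      · -- conservation of trains
        intro w
        beta_reduce
        simp only [ht]
        rw [MRB.inflow_add A s₀.sw c (fun u => if u = v1 then τ else 0) (Sum.inl w),
          MRB.inflow_single, ← hswi]
        have h2 := hct w
        have hτle' : τ ≤ (f i).t (Sum.inl v1) := hτle
        by_cases hwv : w = v1
        · rw [hwv] at h2 ⊢
          rw [if_pos rfl, if_pos rfl]
          cases hb : (f i).sw v1 <;>
            simp only [Arrival.curr, Arrival.nxt, hb] <;>
            by_cases hwe : A.sEven v1 = Sum.inl v1 <;>
              by_cases hwo : A.sOdd v1 = Sum.inl v1 <;>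
                simp [hwe, hwo, MRB.evA, MRB.odA] <;> omega
        · rw [if_neg (fun h => hwv (Sum.inl.inj h)), if_neg hwv]
          cases hb : (f i).sw v1 <;>
            simp only [Arrival.curr, Arrival.nxt, hb] <;>
            by_cases hwe : A.sEven v1 = Sum.inl w <;>
              by_cases hwo : A.sOdd v1 = Sum.inl w <;>
                simp [hwe, hwo, MRB.evA, MRB.odA] <;> omega
      · -- even traversal counts
        intro v
        beta_reduce
        simp only [hev]
        by_cases hv : v = v1
        · subst hv
          rw [if_pos rfl, if_pos rfl, hcev v, MRB.evA_add, ← hswi]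
          cases hb : (f i).sw v <;> simp [MRB.evA] <;> omega
        · rw [if_neg hv, if_neg hv]
          simp only [Nat.add_zero]
          exact hcev v
      · -- odd traversal counts
        intro v
        beta_reduce
        simp only [hod]
        by_cases hv : v = v1
        · subst hv
          rw [if_pos rfl, if_pos rfl, hcod v, MRB.odA_add, ← hswi]
          cases hb : (f i).sw v <;> simp [MRB.odA, MRB.evA] <;> omega
        · rw [if_neg hv, if_neg hv]
          simp only [Nat.add_zero]
          exact hcod v
      · -- switch states
        intro v
        beta_reduce
        simp only [hsw]
        by_cases hv : v = v1
        · subst hv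
          rw [if_pos rfl, if_pos rfl, hswi, MRB.flipN_add, MRB.flipN_eq_xor, MRB.flipN_eq_xor]
        · rw [if_neg hv, if_neg hv]
          simp only [Nat.add_zero]
          exact hcsw v
  obtain ⟨c, hle, _, hcev, hcod, _⟩ := key m le_rfl
  have hpoint : ∀ v : V, (f m).ev v + (f m).od v = (s₀.ev v + s₀.od v) + c v := by
    intro v
    rw [hcev v, hcod v]
    have := MRB.evA_add_odA (s₀.sw v) (c v)
    omega
  calc ∑ v : V, ((f m).ev v + (f m).od v)
      = ∑ v : V, ((s₀.ev v + s₀.od v) + c v) :=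
        Finset.sum_congr rfl (fun v _ => hpoint v)
    _ = (∑ v : V, (s₀.ev v + s₀.od v)) + ∑ v : V, c v := Finset.sum_add_distrib
    _ ≤ (∑ v : V, (s₀.ev v + s₀.od v)) + ∑ v : V, cs v :=
        Nat.add_le_add_left (Finset.sum_le_sum (fun v _ => hle v)) _
    _ ≤ (∑ v : V, (s₀.ev v + s₀.od v)) + R * ((n - ℓ + 2) * 2 ^ ℓ - 2) :=
        Nat.add_le_add_left hcstot _
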